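/- Let S be a pre-Hilbert space, L a pre-Hilbert space logic on S, and F a finite dimensional linear subspace of S. Then the map T_F : L → L, A ↦ A + F, is o-continuous; in particular, if A_γ ↑ A in L then A_γ + F ↑ A + F in L, and if A_γ ↓ A in L then A_γ + F ↓ A + F in L. -/

import Mathlib

variable {𝕜 S : Type*} [RCLike 𝕜] [NormedAddCommGroup S] [InnerProductSpace 𝕜 S]

/-- A pre-Hilbert space logic on a pre-Hilbert space `S`: a family of orthogonally closed
linear subspaces containing `{0}`, closed under orthocomplementation and under the
addition of one-dimensional subspaces. -/
def IsPreHilbertLogic (L : Set (Submodule 𝕜 S)) : Prop :=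
  (∀ M ∈ L, Mᗮᗮ = M) ∧ (⊥ : Submodule 𝕜 S) ∈ L ∧ (∀ M ∈ L, Mᗮ ∈ L) ∧
    ∀ M ∈ L, ∀ u : S, M ⊔ (𝕜 ∙ u) ∈ L

section NetDefs

variable {Γ P : Type*} [Preorder Γ] [Preorder P]

/-- A net `x` increases to `l`: it is monotone and `l` is its supremum. -/
def IncreasingTo (x : Γ → P) (l : P) : Prop :=
  Monotone x ∧ IsLUB (Set.range x) l

/-- A net `x` decreases to `l`: it is antitone and `l` is its infimum. -/
def DecreasingTo (x : Γ → P) (l : P) : Prop :=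
  Antitone x ∧ IsGLB (Set.range x) l

/-- Order convergence of a net in a poset. -/
def OConvergesTo (x : Γ → P) (l : P) : Prop :=
  ∃ a b : Γ → P, (∀ γ, a γ ≤ x γ) ∧ (∀ γ, x γ ≤ b γ) ∧ IncreasingTo a l ∧ DecreasingTo b l

end NetDefs

lemma PHL.sup_span_finset_mem {L : Set (Submodule 𝕜 S)} (hL : IsPreHilbertLogic L)
    (s : Finset S) (M : Submodule 𝕜 S) (hM : M ∈ L) :
    M ⊔ Submodule.span 𝕜 (s : Set S) ∈ L := by
  classical
  induction s using Finset.induction_on with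
  | empty => simpa using hM
  | @insert a s ha ih =>
      have : M ⊔ Submodule.span 𝕜 (↑(insert a s) : Set S)
          = (M ⊔ Submodule.span 𝕜 (s : Set S)) ⊔ (𝕜 ∙ a) := by
        rw [Finset.coe_insert, Submodule.span_insert]
        rw [sup_comm (𝕜 ∙ a) (Submodule.span 𝕜 (s : Set S)), ← sup_assoc]
      rw [this]
      exact hL.2.2.2 _ ih a

lemma PHL.sup_fd_mem {L : Set (Submodule 𝕜 S)} (hL : IsPreHilbertLogic L)
    (M : Submodule 𝕜 S) (hM : M ∈ L) (F : Submodule 𝕜 S) [FiniteDimensional 𝕜 F] :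
    M ⊔ F ∈ L := by
  obtain ⟨s, hs⟩ := (Submodule.fg_iff_finiteDimensional F).mpr ‹_›
  rw [← hs]
  exact PHL.sup_span_finset_mem hL s M hM

lemma PHL.inf_ortho_singleton_mem {L : Set (Submodule 𝕜 S)} (hL : IsPreHilbertLogic L)
    (C : Submodule 𝕜 S) (hC : C ∈ L) (g : S) : C ⊓ (𝕜 ∙ g)ᗮ ∈ L := by
  have h1 : (Cᗮ ⊔ (𝕜 ∙ g))ᗮ ∈ L := hL.2.2.1 _ (hL.2.2.2 _ (hL.2.2.1 _ hC) g)
  rwa [← Submodule.inf_orthogonal, hL.1 _ hC] at h1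

open Module in
lemma PHL.orthoClosed_mem {L : Set (Submodule 𝕜 S)} (hL : IsPreHilbertLogic L) :
    ∀ (n : ℕ) (C D F : Submodule 𝕜 S), C ∈ L → Dᗮᗮ = D → D ≤ C → F ≤ C →
      FiniteDimensional 𝕜 F → finrank 𝕜 F ≤ n → C = D ⊔ F → D ∈ L := by
  intro n
  induction n with
  | zero =>
      intro C D F hC hD hDC hFC hfin hrank hsum
      have hF : F = ⊥ := by
        haveI := hfin
        exact Submodule.finrank_eq_zero.mp (Nat.le_zero.mp hrank)
      rw [hF, sup_bot_eq] at hsum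
      exact hsum ▸ hC
  | succ n ih =>
      intro C D F hC hD hDC hFC hfin hrank hsum
      haveI := hfin
      by_cases hFD : F ≤ D
      · have hCD : C = D := le_antisymm (by rw [hsum]; exact sup_le le_rfl hFD) hDC
        exact hCD ▸ hC
      · obtain ⟨x, hxF, hxD⟩ := SetLike.not_le_iff_exists.mp hFD
        have hxDp : x ∉ Dᗮᗮ := by rwa [hD]
        rw [Submodule.mem_orthogonal] at hxDp
        push_neg at hxDp
        obtain ⟨g, hgD, hgx⟩ := hxDp
        have hgD' : ∀ d ∈ D, (inner 𝕜 g d : 𝕜) = 0 := (Submodule.mem_orthogonal' D g).mp hgD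
        set C' := C ⊓ (𝕜 ∙ g)ᗮ with hC'def
        set F' := F ⊓ (𝕜 ∙ g)ᗮ with hF'def
        have hDg : D ≤ (𝕜 ∙ g)ᗮ := by
          intro d hd
          rw [Submodule.mem_orthogonal]
          intro u hu
          obtain ⟨c, rfl⟩ := Submodule.mem_span_singleton.mp hu
          rw [inner_smul_left, hgD' d hd, mul_zero]
        have hC' : C' ∈ L := PHL.inf_ortho_singleton_mem hL C hC g
        have hDC' : D ≤ C' := le_inf hDC hDg
        have hF'C' : F' ≤ C' := inf_le_inf_right _ hFC
        have hxF' : x ∉ F' := by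
          intro hx
          exact hgx (Submodule.inner_right_of_mem_orthogonal
            (Submodule.mem_span_singleton_self g) hx.2)
        haveI : FiniteDimensional 𝕜 F' := Submodule.finiteDimensional_of_le inf_le_left
        have hrank' : finrank 𝕜 F' ≤ n := by
          have hlt : F' < F := lt_of_le_of_ne inf_le_left (fun h => hxF' (h ▸ hxF))
          have := Submodule.finrank_lt_finrank_of_lt (t := F) hlt
          omega
        have hsum' : C' = D ⊔ F' := by
          refine le_antisymm ?_ (sup_le hDC' hF'C')
          intro c hc
          have hcC : c ∈ C := hc.1
          rw [hsum] at hcC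
          obtain ⟨d, hd, f, hf, rfl⟩ := Submodule.mem_sup.mp hcC
          have hgc : (inner 𝕜 g (d + f) : 𝕜) = 0 :=
            Submodule.inner_right_of_mem_orthogonal
              (Submodule.mem_span_singleton_self g) hc.2
          have hgf : (inner 𝕜 g f : 𝕜) = 0 := by
            rw [inner_add_right, hgD' d hd, zero_add] at hgc
            exact hgc
          have hfg : f ∈ (𝕜 ∙ g)ᗮ := by
            rw [Submodule.mem_orthogonal]
            intro u hu
            obtain ⟨c', rfl⟩ := Submodule.mem_span_singleton.mp hu
            rw [inner_smul_left, hgf, mul_zero]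
          have hfF' : f ∈ F' := ⟨hf, hfg⟩
          exact Submodule.mem_sup.mpr ⟨d, hd, f, hfF', rfl⟩
        exact ih C' D F' hC' hD hDC' hF'C' ‹_› hrank' hsum'

lemma PHL.coe_le {L : Set (Submodule 𝕜 S)} (x y : L) :
    x ≤ y ↔ (x : Submodule 𝕜 S) ≤ (y : Submodule 𝕜 S) := Iff.rfl

lemma PHL.inc {L : Set (Submodule 𝕜 S)} (_hL : IsPreHilbertLogic L)
    (F : Submodule 𝕜 S) [FiniteDimensional 𝕜 F]
    {Γ : Type*} [Preorder Γ] [Nonempty Γ]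
    (A : Γ → L) (Alim : L) (B : Γ → L) (Blim : L)
    (hB : ∀ γ, (B γ : Submodule 𝕜 S) = (A γ : Submodule 𝕜 S) ⊔ F)
    (hBlim : (Blim : Submodule 𝕜 S) = (Alim : Submodule 𝕜 S) ⊔ F)
    (h : IncreasingTo A Alim) : IncreasingTo B Blim := by
  obtain ⟨hmono, hub, hleast⟩ := h
  refine ⟨?_, ?_, ?_⟩
  · intro γ γ' hγ
    rw [PHL.coe_le, hB, hB]
    exact sup_le_sup_right (hmono hγ) F
  · rintro x ⟨γ, rfl⟩
    rw [PHL.coe_le, hB, hBlim]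
    exact sup_le_sup_right (hub ⟨γ, rfl⟩) F
  · intro C hC
    rw [PHL.coe_le, hBlim]
    have h1 : ∀ γ, (A γ : Submodule 𝕜 S) ≤ (C : Submodule 𝕜 S) := fun γ =>
      le_trans le_sup_left (by rw [← hB γ]; exact hC ⟨γ, rfl⟩)
    have h2 : (Alim : Submodule 𝕜 S) ≤ (C : Submodule 𝕜 S) :=
      hleast (fun x ⟨γ, hγ⟩ => hγ ▸ h1 γ)
    have h3 : F ≤ (C : Submodule 𝕜 S) := by
      obtain γ₀ := Classical.arbitrary Γ
      exact le_trans (le_trans le_sup_right (hB γ₀).ge) (hC ⟨γ₀, rfl⟩)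
    exact sup_le h2 h3

open Module in
lemma PHL.dec {L : Set (Submodule 𝕜 S)} (hL : IsPreHilbertLogic L)
    (F : Submodule 𝕜 S) [FiniteDimensional 𝕜 F]
    {Γ : Type*} [Preorder Γ] [IsDirected Γ (· ≤ ·)] [Nonempty Γ]
    (A : Γ → L) (Alim : L) (B : Γ → L) (Blim : L)
    (hB : ∀ γ, (B γ : Submodule 𝕜 S) = (A γ : Submodule 𝕜 S) ⊔ F)
    (hBlim : (Blim : Submodule 𝕜 S) = (Alim : Submodule 𝕜 S) ⊔ F)
    (h : DecreasingTo A Alim) : DecreasingTo B Blim := by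
  obtain ⟨hanti, hlb, hgreatest⟩ := h
  refine ⟨?_, ?_, ?_⟩
  · intro γ γ' hγ
    rw [PHL.coe_le, hB, hB]
    exact sup_le_sup_right (hanti hγ) F
  · rintro x ⟨γ, rfl⟩
    rw [PHL.coe_le, hBlim, hB]
    exact sup_le_sup_right (hlb ⟨γ, rfl⟩) F
  · intro C hC
    rw [PHL.coe_le, hBlim]
    -- replace C by C' = C ⊔ F
    set C' : Submodule 𝕜 S := (C : Submodule 𝕜 S) ⊔ F with hC'def
    have hC'L : C' ∈ L := PHL.sup_fd_mem hL _ C.2 F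
    have hFC' : F ≤ C' := le_sup_right
    have hC'le : ∀ γ, C' ≤ (A γ : Submodule 𝕜 S) ⊔ F := fun γ =>
      sup_le (le_trans (hC ⟨γ, rfl⟩) (hB γ).le) le_sup_right
    set D : Γ → Submodule 𝕜 S := fun γ => C' ⊓ (A γ : Submodule 𝕜 S) with hDdef
    have hmod : ∀ γ, C' = D γ ⊔ F := by
      intro γ
      have := inf_sup_assoc_of_le (x := C') ((A γ : Submodule 𝕜 S)) hFC'
      rw [hDdef]
      dsimp only
      rw [this, inf_eq_left.mpr (hC'le γ)]
    set E : Γ → Submodule 𝕜 S := fun γ => F ⊓ D γ with hEdef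
    haveI hEfin : ∀ γ, FiniteDimensional 𝕜 (E γ) := fun γ =>
      Submodule.finiteDimensional_of_le inf_le_left
    have hne : (Set.range fun γ => finrank 𝕜 (E γ)).Nonempty := Set.range_nonempty _
    obtain ⟨γ₀, hγ₀⟩ := Nat.sInf_mem hne
    have hDle : ∀ γ, D γ₀ ≤ (A γ : Submodule 𝕜 S) := by
      intro γ
      obtain ⟨γ', h1, h2⟩ := directed_of (· ≤ ·) γ₀ γ
      have hDanti : D γ' ≤ D γ₀ := inf_le_inf_left _ (hanti h1)
      have hEeq : E γ' = E γ₀ := by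
        haveI := hEfin γ₀
        refine Submodule.eq_of_le_of_finrank_le (inf_le_inf_left _ hDanti) ?_
        have hγ₀' : finrank 𝕜 (E γ₀) = sInf (Set.range fun γ => finrank 𝕜 (E γ)) := hγ₀
        rw [hγ₀']
        exact Nat.sInf_le ⟨γ', rfl⟩
      have hD0 : D γ₀ ≤ D γ' := by
        intro x hx
        have hxC' : x ∈ C' := hx.1
        rw [hmod γ'] at hxC'
        obtain ⟨d, hd, f, hf, rfl⟩ := Submodule.mem_sup.mp hxC'
        have hfD0 : f ∈ D γ₀ := by
          have : (d + f) - d ∈ D γ₀ := Submodule.sub_mem _ hx (hDanti hd)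
          simpa using this
        have : f ∈ E γ₀ := ⟨hf, hfD0⟩
        rw [← hEeq] at this
        exact Submodule.add_mem _ hd this.2
      exact le_trans hD0 (le_trans inf_le_right (hanti h2))
    have hDL : D γ₀ ∈ L := by
      have hDortho : (D γ₀)ᗮᗮ = D γ₀ := by
        refine le_antisymm ?_ (Submodule.le_orthogonal_orthogonal _)
        refine le_inf ?_ ?_
        · rw [← hL.1 _ hC'L]
          exact Submodule.orthogonal_le (Submodule.orthogonal_le inf_le_left)
        · rw [← hL.1 _ (A γ₀).2]
          exact Submodule.orthogonal_le (Submodule.orthogonal_le inf_le_right)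
      exact PHL.orthoClosed_mem hL (finrank 𝕜 F) C' (D γ₀) F hC'L hDortho
        inf_le_left hFC' ‹_› le_rfl (hmod γ₀)
    have hDAlim : D γ₀ ≤ (Alim : Submodule 𝕜 S) :=
      hgreatest (fun x ⟨γ, hγ⟩ => hγ ▸ hDle γ : (⟨D γ₀, hDL⟩ : L) ∈ lowerBounds (Set.range A))
    calc (C : Submodule 𝕜 S) ≤ C' := le_sup_left
      _ = D γ₀ ⊔ F := hmod γ₀
      _ ≤ (Alim : Submodule 𝕜 S) ⊔ F := sup_le_sup_right hDAlim F

/-- In a pre-Hilbert space logic `L`, perturbation by a finite dimensional subspace `F`,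
`T_F : A ↦ A + F`, is o-continuous: it maps o-convergent nets in `L` to o-convergent
nets; in particular `Aᵧ ↑ A` implies `Aᵧ + F ↑ A + F` and `Aᵧ ↓ A` implies
`Aᵧ + F ↓ A + F` in `L`. -/
theorem perturbation_oContinuous (L : Set (Submodule 𝕜 S)) (hL : IsPreHilbertLogic L)
    (F : Submodule 𝕜 S) [FiniteDimensional 𝕜 F]
    (Γ : Type*) [Preorder Γ] [IsDirected Γ (· ≤ ·)] [Nonempty Γ]
    (A : Γ → L) (Alim : L) (B : Γ → L) (Blim : L)
    (hB : ∀ γ, (B γ : Submodule 𝕜 S) = (A γ : Submodule 𝕜 S) ⊔ F)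
    (hBlim : (Blim : Submodule 𝕜 S) = (Alim : Submodule 𝕜 S) ⊔ F) :
    (OConvergesTo A Alim → OConvergesTo B Blim) ∧
      (IncreasingTo A Alim → IncreasingTo B Blim) ∧
      (DecreasingTo A Alim → DecreasingTo B Blim) := by

  refine ⟨?_, fun h => PHL.inc hL F A Alim B Blim hB hBlim h,
    fun h => PHL.dec hL F A Alim B Blim hB hBlim h⟩
  rintro ⟨a, b, ha, hb, hainc, hbdec⟩
  set a' : Γ → L := fun γ => ⟨(a γ : Submodule 𝕜 S) ⊔ F, PHL.sup_fd_mem hL _ (a γ).2 F⟩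
  set b' : Γ → L := fun γ => ⟨(b γ : Submodule 𝕜 S) ⊔ F, PHL.sup_fd_mem hL _ (b γ).2 F⟩
  refine ⟨a', b', ?_, ?_, ?_, ?_⟩
  · intro γ
    rw [PHL.coe_le, hB γ]
    exact sup_le_sup_right (ha γ) F
  · intro γ
    rw [PHL.coe_le, hB γ]
    exact sup_le_sup_right (hb γ) F
  · exact PHL.inc hL F a Alim a' Blim (fun γ => rfl) hBlim hainc
  · exact PHL.dec hL F b Alim b' Blim (fun γ => rfl) hBlim hbdec
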